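/- Let n, N be positive natural numbers, A a real n × n matrix, B a real n × N matrix, T > 0, and suppose the reachability Gramian W = ∫₀ᵀ exp(tA)·B·Bᵀ·exp(tAᵀ) dt is invertible. Fix x* ∈ ℝ^n and define the control u*(s) = Bᵀ·exp((T−s)Aᵀ)·W⁻¹·x* for s ∈ [0, T]. Then u* steers the system from the origin to x*, i.e. ∫₀ᵀ exp((T−s)A)·B·u*(s) ds = x*, and its energy equals the minimum: ∫₀ᵀ ‖u*(s)‖² ds = ⟨x*, W⁻¹·x*⟩. -/

import Mathlib

open Matrix

attribute [local instance] Matrix.normedAddCommGroup Matrix.normedSpace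

/-- **The minimum-energy control attains the Gramian bound.**
For the linear system `ẋ = Ax + Bu` with invertible reachability Gramian
`W = ∫₀ᵀ e^{tA} B Bᵀ e^{tAᵀ} dt`, the control `u*(s) = Bᵀ e^{(T−s)Aᵀ} W⁻¹ x*` steers the
origin to `x*` at time `T`, i.e. `∫₀ᵀ e^{(T−s)A} B u*(s) ds = x*`, and its energy equals
the minimum: `∫₀ᵀ ‖u*(s)‖² ds = ⟨x*, W⁻¹ x*⟩`. -/
theorem gramian_minimum_energy_control
    (n N : ℕ) (hn : 0 < n) (hN : 0 < N)
    (A : Matrix (Fin n) (Fin n) ℝ) (B : Matrix (Fin n) (Fin N) ℝ)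
    (T : ℝ) (hT : 0 < T)
    (W : Matrix (Fin n) (Fin n) ℝ)
    (hW : W = ∫ t in (0:ℝ)..T,
      NormedSpace.exp (t • A) * B * Bᵀ * NormedSpace.exp (t • Aᵀ))
    (hWinv : IsUnit W)
    (xstar : Fin n → ℝ)
    (ustar : ℝ → Fin N → ℝ)
    (hustar : ∀ s, ustar s =
      (Bᵀ * NormedSpace.exp ((T - s) • Aᵀ)).mulVec (W⁻¹.mulVec xstar)) :
    (∫ s in (0:ℝ)..T,
      (NormedSpace.exp ((T - s) • A) * B).mulVec (ustar s)) = xstar ∧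
    (∫ s in (0:ℝ)..T, ustar s ⬝ᵥ ustar s) = xstar ⬝ᵥ W⁻¹.mulVec xstar := by
  set v : Fin n → ℝ := W⁻¹.mulVec xstar with hv
  set G : ℝ → Matrix (Fin n) (Fin n) ℝ :=
    fun t => NormedSpace.exp (t • A) * B * Bᵀ * NormedSpace.exp (t • Aᵀ) with hG
  have hexpc : ∀ (M : Matrix (Fin n) (Fin n) ℝ),
      Continuous fun t : ℝ => NormedSpace.exp (t • M) := by
    intro M
    letI R : NormedRing (Matrix (Fin n) (Fin n) ℝ) := Matrix.linftyOpNormedRing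
    letI : NormedAlgebra ℝ (Matrix (Fin n) (Fin n) ℝ) := Matrix.linftyOpNormedAlgebra
    letI Q : NormedAlgebra ℚ (Matrix (Fin n) (Fin n) ℝ) := NormedAlgebra.restrictScalars ℚ ℝ _
    exact (@NormedSpace.exp_continuous _ R Q (inferInstanceAs (CompleteSpace (Fin n → Fin n → ℝ)))).comp (continuous_id.smul continuous_const)
  have hGcont : Continuous G :=
    (((hexpc A).matrix_mul continuous_const).matrix_mul continuous_const).matrix_mul (hexpc Aᵀ)
  have hGint : @IntervalIntegrable _ PseudoMetricSpace.toUniformSpace.toTopologicalSpace _ (fun s => G (T - s)) MeasureTheory.volume 0 T :=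
    (hGcont.comp (continuous_const.sub continuous_id)).intervalIntegrable 0 T
  have hGW : (∫ s in (0:ℝ)..T, G (T - s)) = W := by
    rw [intervalIntegral.integral_comp_sub_left G T, sub_self, sub_zero, hW]
  have hWv : W.mulVec v = xstar := by
    rw [hv, Matrix.mulVec_mulVec, Matrix.mul_nonsing_inv W
      ((Matrix.isUnit_iff_isUnit_det W).mp hWinv), Matrix.one_mulVec]
  have htr : ∀ s : ℝ, (Bᵀ * NormedSpace.exp ((T - s) • Aᵀ))ᵀ = NormedSpace.exp ((T - s) • A) * B := by
    intro s
    rw [Matrix.transpose_mul, ← Matrix.transpose_smul, ← Matrix.exp_transpose,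
      Matrix.transpose_transpose, Matrix.transpose_transpose]
  -- pull linear maps through the integral
  have hLmulVec : (∫ s in (0:ℝ)..T, (G (T - s)).mulVec v)
      = (∫ s in (0:ℝ)..T, G (T - s)).mulVec v := by
    let L : Matrix (Fin n) (Fin n) ℝ →L[ℝ] (Fin n → ℝ) :=
      LinearMap.toContinuousLinearMap
        { toFun := fun M => M.mulVec v
          map_add' := fun M M' => by simp [Matrix.add_mulVec]
          map_smul' := fun c M => by simp [Matrix.smul_mulVec] }
    have h := L.intervalIntegral_comp_comm hGint
    exact h
  have hdot : (∫ s in (0:ℝ)..T, v ⬝ᵥ (G (T - s)).mulVec v)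
      = v ⬝ᵥ (∫ s in (0:ℝ)..T, G (T - s)).mulVec v := by
    let ℓ : Matrix (Fin n) (Fin n) ℝ →L[ℝ] ℝ :=
      LinearMap.toContinuousLinearMap
        { toFun := fun M => v ⬝ᵥ M.mulVec v
          map_add' := fun M M' => by simp [Matrix.add_mulVec, dotProduct_add]
          map_smul' := fun c M => by
            simp [Matrix.smul_mulVec, dotProduct_smul] }
    have h := ℓ.intervalIntegral_comp_comm hGint
    exact h
  constructor
  · have h1 : ∀ s : ℝ, (NormedSpace.exp ((T - s) • A) * B).mulVec (ustar s) = (G (T - s)).mulVec v := by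
      intro s
      rw [hustar s, Matrix.mulVec_mulVec, hG]
      rw [← Matrix.mul_assoc]
    calc (∫ s in (0:ℝ)..T, (NormedSpace.exp ((T - s) • A) * B).mulVec (ustar s))
        = ∫ s in (0:ℝ)..T, (G (T - s)).mulVec v := by simp only [h1]
      _ = (∫ s in (0:ℝ)..T, G (T - s)).mulVec v := hLmulVec
      _ = xstar := by rw [hGW, hWv]
  · have key : ∀ (M : Matrix (Fin N) (Fin n) ℝ) (w : Fin n → ℝ),
        (M.mulVec w) ⬝ᵥ (M.mulVec w) = w ⬝ᵥ (Mᵀ * M).mulVec w := by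
      intro M w
      conv_rhs => rw [← Matrix.mulVec_mulVec]
      rw [Matrix.dotProduct_mulVec w, Matrix.vecMul_transpose]
    have h2 : ∀ s : ℝ, ustar s ⬝ᵥ ustar s = v ⬝ᵥ (G (T - s)).mulVec v := by
      intro s
      rw [hustar s, key]
      rw [show (Bᵀ * NormedSpace.exp ((T - s) • Aᵀ))ᵀ * (Bᵀ * NormedSpace.exp ((T - s) • Aᵀ)) = G (T - s) from by
        rw [htr s, hG, ← Matrix.mul_assoc]]
    calc (∫ s in (0:ℝ)..T, ustar s ⬝ᵥ ustar s)
        = ∫ s in (0:ℝ)..T, v ⬝ᵥ (G (T - s)).mulVec v := by simp only [h2]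
      _ = v ⬝ᵥ (∫ s in (0:ℝ)..T, G (T - s)).mulVec v := hdot
      _ = xstar ⬝ᵥ v := by rw [hGW, hWv, dotProduct_comm]
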